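/- If A is a 2×2 complex matrix and e^A is diagonalizable, then A is diagonalizable. -/

import Mathlib

open Matrix

/-- A matrix is diagonalizable over ℂ if it is similar to a diagonal matrix. -/
def Diagonalizable (A : Matrix (Fin 2) (Fin 2) ℂ) : Prop :=
  ∃ P D : Matrix (Fin 2) (Fin 2) ℂ, IsUnit P.det ∧ D.IsDiag ∧ A = P * D * P⁻¹


lemma cayley2 (A : Matrix (Fin 2) (Fin 2) ℂ) :
    A * A - A.trace • A + A.det • (1 : Matrix (Fin 2) (Fin 2) ℂ) = 0 := by
  ext i j
  fin_cases i <;> fin_cases j <;>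
    simp [Matrix.mul_apply, Fin.sum_univ_two, Matrix.trace_fin_two, Matrix.det_fin_two,
      Matrix.one_apply] <;> ring

lemma prop2 {u v : Fin 2 → ℂ} (hu : u ≠ 0) (h : u 0 * v 1 - u 1 * v 0 = 0) :
    ∃ c : ℂ, v = c • u := by
  by_cases h0 : u 0 ≠ 0
  · refine ⟨v 0 / u 0, ?_⟩
    funext i
    fin_cases i
    · simp [div_mul_cancel₀, h0]
    · have : v 1 = u 1 * v 0 / u 0 := by field_simp; linear_combination h
      simp [this]; ring
  · push_neg at h0
    have h1 : u 1 ≠ 0 := by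
      intro h1; apply hu; funext i; fin_cases i <;> simp [h0, h1]
    refine ⟨v 1 / u 1, ?_⟩
    funext i
    fin_cases i
    · have : v 0 = u 0 * v 1 / u 1 := by field_simp; linear_combination -h
      simp [this]; ring
    · simp [div_mul_cancel₀, h1]

lemma eigvec_of_col {A M : Matrix (Fin 2) (Fin 2) ℂ} {r : ℂ} (hM : M ≠ 0)
    (h : A * M = r • M) : ∃ v : Fin 2 → ℂ, v ≠ 0 ∧ A.mulVec v = r • v := by
  have : ∃ i j, M i j ≠ 0 := by
    by_contra hc
    push_neg at hc
    exact hM (by ext i j; simpa using hc i j)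
  obtain ⟨i, j, hij⟩ := this
  refine ⟨fun k => M k j, fun hv => hij (congrFun hv i), ?_⟩
  funext k
  have := congrFun (congrFun h k) j
  simpa [Matrix.mul_apply, mulVec, dotProduct] using this

lemma diag_of_two_eigvecs {A : Matrix (Fin 2) (Fin 2) ℂ} {r s : ℂ} {v w : Fin 2 → ℂ}
    (hrs : r ≠ s) (hv0 : v ≠ 0) (hw0 : w ≠ 0)
    (hv : A.mulVec v = r • v) (hw : A.mulVec w = s • w) : Diagonalizable A := by
  set P : Matrix (Fin 2) (Fin 2) ℂ := Matrix.of ![![v 0, w 0], ![v 1, w 1]] with hP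
  have hdet : P.det = v 0 * w 1 - w 0 * v 1 := by simp [hP, Matrix.det_fin_two]
  have hdu : IsUnit P.det := by
    rw [hdet, isUnit_iff_ne_zero]
    intro hz
    obtain ⟨c, hc⟩ := prop2 (u := v) (v := w) hv0 (by linear_combination hz)
    have h1 : A.mulVec w = r • w := by
      rw [hc, Matrix.mulVec_smul, hv, smul_comm]
    have h2 : (r - s) • w = 0 := by
      rw [sub_smul, h1.symm, hw, sub_self]
    rcases smul_eq_zero.mp h2 with h | h
    · exact hrs (by linear_combination h)
    · exact hw0 h
  set D : Matrix (Fin 2) (Fin 2) ℂ := Matrix.diagonal ![r, s] with hD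
  have hv0' := congrFun hv 0
  have hv1' := congrFun hv 1
  have hw0' := congrFun hw 0
  have hw1' := congrFun hw 1
  simp [mulVec, dotProduct, Fin.sum_univ_two] at hv0' hv1' hw0' hw1'
  have key : A * P = P * D := by
    ext i j
    fin_cases i <;> fin_cases j <;>
      simp [hP, hD, Matrix.mul_apply, Fin.sum_univ_two, Matrix.diagonal] <;>
      [linear_combination hv0'; linear_combination hw0';
       linear_combination hv1'; linear_combination hw1']
  refine ⟨P, D, hdu, Matrix.isDiag_diagonal _, ?_⟩
  have hPP : P * P⁻¹ = 1 := Matrix.mul_nonsing_inv P hdu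
  calc A = A * (P * P⁻¹) := by rw [hPP, mul_one]
    _ = (A * P) * P⁻¹ := by rw [mul_assoc]
    _ = P * D * P⁻¹ := by rw [key]

lemma factor2 {A : Matrix (Fin 2) (Fin 2) ℂ} {r s : ℂ} (h1 : r + s = A.trace)
    (h2 : r * s = A.det) :
    (A - r • 1) * (A - s • 1) = 0 := by
  have hc := cayley2 A
  have expand : (A - r • 1) * (A - s • 1)
      = A * A - (r + s) • A + (r * s) • (1 : Matrix (Fin 2) (Fin 2) ℂ) := by
    simp only [sub_mul, mul_sub, smul_mul_assoc, mul_smul_comm, one_mul, mul_one, smul_smul,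
      add_smul]
    module
  rw [expand, h1, h2, hc]

lemma exp_sq_zero {N : Matrix (Fin 2) (Fin 2) ℂ} (h : N * N = 0) :
    NormedSpace.exp N = 1 + N := by
  letI : SeminormedRing (Matrix (Fin 2) (Fin 2) ℂ) := Matrix.linftyOpSemiNormedRing
  letI : NormedRing (Matrix (Fin 2) (Fin 2) ℂ) := Matrix.linftyOpNormedRing
  letI : NormedAlgebra ℂ (Matrix (Fin 2) (Fin 2) ℂ) := Matrix.linftyOpNormedAlgebra
  rw [NormedSpace.exp_eq_tsum (𝕂 := ℂ)]; beta_reduce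
  have hpow : ∀ n, n ∉ Finset.range 2 → ((n.factorial : ℂ)⁻¹ • N ^ n : Matrix (Fin 2) (Fin 2) ℂ) = 0 := by
    intro n hn
    rw [Finset.mem_range, not_lt] at hn
    have : N ^ n = N ^ 2 * N ^ (n - 2) := by rw [← pow_add]; congr 1; omega
    rw [this, pow_two, h, zero_mul, smul_zero]
  rw [tsum_eq_sum hpow]
  simp [Finset.sum_range_succ]

lemma exp_smul_one (r : ℂ) :
    NormedSpace.exp ((r • 1 : Matrix (Fin 2) (Fin 2) ℂ)) = Complex.exp r • 1 := by
  rw [Matrix.smul_one_eq_diagonal, Matrix.exp_diagonal, Pi.exp_def]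
  simp [← Complex.exp_eq_exp_ℂ, Matrix.smul_one_eq_diagonal]

lemma diag_sq_zero {D : Matrix (Fin 2) (Fin 2) ℂ} (hd : D.IsDiag) (h : D * D = 0) :
    D = 0 := by
  have h01 : D 0 1 = 0 := hd (by decide)
  have h10 : D 1 0 = 0 := hd (by decide)
  ext i j
  fin_cases i <;> fin_cases j
  · have := congrFun (congrFun h 0) 0
    simp [Matrix.mul_apply, Fin.sum_univ_two, h01, h10, mul_self_eq_zero] at this
    simpa using this
  · simpa using h01
  · simpa using h10
  · have := congrFun (congrFun h 1) 1
    simp [Matrix.mul_apply, Fin.sum_univ_two, h01, h10, mul_self_eq_zero] at this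
    simpa using this

lemma eig_E {A : Matrix (Fin 2) (Fin 2) ℂ} {r s : ℂ} (hrs : r ≠ s)
    (hf : (A - r • 1) * (A - s • 1) = 0) (hsum : r + s = A.trace) :
    ∃ v : Fin 2 → ℂ, v ≠ 0 ∧ A.mulVec v = r • v := by
  have hrs' : r - s ≠ 0 := sub_ne_zero.mpr hrs
  set E : Matrix (Fin 2) (Fin 2) ℂ := (r - s)⁻¹ • (A - s • 1) with hE
  have h1 : A * (A - s • 1) = r • (A - s • 1) := by
    rw [sub_mul, smul_mul_assoc, one_mul] at hf
    exact sub_eq_zero.mp hf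
  have hAE : A * E = r • E := by
    rw [hE, mul_smul_comm, h1, smul_comm]
  have hEne : E ≠ 0 := by
    intro h0
    have htr : E.trace = 1 := by
      rw [hE, Matrix.trace_smul, Matrix.trace_sub, Matrix.trace_smul, Matrix.trace_one]
      simp only [smul_eq_mul, Fintype.card_fin]
      field_simp
      linear_combination -hsum
    rw [h0] at htr
    simp at htr
  exact eigvec_of_col hEne hAE

theorem exp_diagonalizable_imp_diagonalizable (A : Matrix (Fin 2) (Fin 2) ℂ)
    (h : Diagonalizable (NormedSpace.exp A)) : Diagonalizable A := by
  obtain ⟨δ, hδ⟩ := IsAlgClosed.exists_pow_nat_eq (k := ℂ) (A.trace ^ 2 - 4 * A.det)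
    (n := 2) (by norm_num)
  by_cases hδ0 : δ = 0
  · -- repeated root case
    subst hδ0
    set N : Matrix (Fin 2) (Fin 2) ℂ := A - (A.trace / 2) • 1 with hN
    have hNN : N * N = 0 := factor2 (by ring) (by linear_combination (-(1 : ℂ)/4) * hδ)
    have hA : A = (A.trace / 2) • 1 + N := by rw [hN]; abel
    have hcomm : Commute ((A.trace / 2) • (1 : Matrix (Fin 2) (Fin 2) ℂ)) N :=
      (Commute.one_left N).smul_left _
    have hexpA : NormedSpace.exp A = Complex.exp (A.trace / 2) • (1 + N) := by
      conv_lhs => rw [hA]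
      rw [Matrix.exp_add_of_commute ((A.trace / 2) • 1) N hcomm, exp_smul_one, exp_sq_zero hNN,
        smul_mul_assoc, one_mul]
    obtain ⟨P, D, hP, hD, hPD⟩ := h
    set c := Complex.exp (A.trace / 2) with hc
    have hcne : c ≠ 0 := Complex.exp_ne_zero _
    have hPP : P * P⁻¹ = 1 := Matrix.mul_nonsing_inv P hP
    have hPP' : P⁻¹ * P = 1 := Matrix.nonsing_inv_mul P hP
    have hM : P * (D - c • 1) * P⁻¹ = c • N := by
      rw [mul_sub, sub_mul, mul_smul_comm, mul_one, smul_mul_assoc, hPP]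
      rw [← hPD, hexpA, smul_add]
      abel
    have hDc : D - c • 1 = P⁻¹ * (c • N) * P := by
      rw [← hM]
      have hstep : P⁻¹ * (P * (D - c • 1) * P⁻¹) * P
          = (P⁻¹ * P) * (D - c • 1) * (P⁻¹ * P) := by noncomm_ring
      rw [hstep, hPP', one_mul, mul_one]
    have hzero : (c • N) * (c • N) = 0 := by
      rw [smul_mul_assoc, mul_smul_comm, hNN, smul_zero, smul_zero]
    have hsq : (D - c • 1) * (D - c • 1) = 0 := by
      rw [hDc]
      calc (P⁻¹ * (c • N) * P) * (P⁻¹ * (c • N) * P)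
          = P⁻¹ * (c • N) * (P * P⁻¹) * ((c • N) * P) := by noncomm_ring
        _ = P⁻¹ * ((c • N) * (c • N)) * P := by rw [hPP, mul_one]; noncomm_ring
        _ = 0 := by rw [hzero, mul_zero, zero_mul]
    have hDdiag : (D - c • 1).IsDiag := by
      intro i j hij
      simp [hD hij, Matrix.one_apply_ne hij]
    have hD0 : D - c • 1 = 0 := diag_sq_zero hDdiag hsq
    have hcN : c • N = 0 := by rw [← hM, hD0, mul_zero, zero_mul]
    have hN0 : N = 0 := by
      rcases smul_eq_zero.mp hcN with h' | h'
      · exact absurd h' hcne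
      · exact h'
    have hAfinal : A = (A.trace / 2) • 1 := by
      conv_lhs => rw [hA]
      rw [hN0, add_zero]
    refine ⟨1, A, by simp, ?_, by simp⟩
    rw [hAfinal]
    intro i j hij
    simp [Matrix.one_apply_ne hij]
  · -- distinct roots case
    set r := (A.trace + δ) / 2 with hr
    set s := (A.trace - δ) / 2 with hs
    have hrs : r ≠ s := by
      intro he
      apply hδ0
      rw [hr, hs] at he
      linear_combination he
    have hsum : r + s = A.trace := by rw [hr, hs]; ring
    have hprod : r * s = A.det := by
      rw [hr, hs]
      linear_combination (-(1 : ℂ)/4) * hδ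
    obtain ⟨v, hv0, hv⟩ := eig_E hrs (factor2 hsum hprod) hsum
    obtain ⟨w, hw0, hw⟩ := eig_E hrs.symm
      (factor2 (by rw [add_comm]; exact hsum) (by rw [mul_comm]; exact hprod))
      (by rw [add_comm]; exact hsum)
    exact diag_of_two_eigvecs hrs hv0 hw0 hv hw
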